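/- arXiv:2210.11120 — 3 statements merged into one kernel-verified Lean document; each statement's English description precedes it below -/
import Mathlib

section
/- Let G = (V, E) be a finite simple graph and e ∈ E. Then γst(G) ≤ γst(G_e) ≤ γst(G) + 1, where G_e denotes the graph obtained from G by subdividing the edge e. -/
open SimpleGraph

/-- The degree of a vertex, as the cardinality of its neighbor set. -/
noncomputable def sdeg {V : Type*} (G : SimpleGraph V) (v : V) : ℕ :=
  (G.neighborSet v).ncard

/-- `D` is a strong dominating set of `G` if every vertex outside `D` has a neighbor
in `D` of at least the same degree. -/
def IsStrongDominatingSet {V : Type*} (G : SimpleGraph V) (D : Set V) : Prop :=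
  ∀ x ∉ D, ∃ y ∈ D, G.Adj x y ∧ sdeg G x ≤ sdeg G y

/-- The strong domination number: minimum cardinality of a strong dominating set. -/
noncomputable def strongDominationNumber {V : Type*} (G : SimpleGraph V) : ℕ :=
  sInf {n | ∃ D : Set V, IsStrongDominatingSet G D ∧ D.ncard = n}

/-- Subdivision of the edge `uv` of `G`: delete `uv`, add a new vertex `none`
adjacent to `u` and `v`. -/
def subdivide {V : Type*} (G : SimpleGraph V) (u v : V) : SimpleGraph (Option V) :=
  SimpleGraph.fromRel (fun a b =>
    match a, b with
    | some x, some y => G.Adj x y ∧ ¬(s(x, y) = s(u, v))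
    | some x, none => x = u ∨ x = v
    | none, some _ => False
    | none, none => False)

/-- Contraction of the edge `uv` of `G`: the vertex `u` plays the role of the merged
vertex, and `v` is removed. -/
def contractEdge {V : Type*} (G : SimpleGraph V) (u v : V) :
    SimpleGraph {x : V // x ≠ v} :=
  SimpleGraph.fromRel (fun a b =>
    G.Adj a.1 b.1 ∨ (a.1 = u ∧ G.Adj v b.1) ∨ (b.1 = u ∧ G.Adj a.1 v))

/-- The corona product `G1 ∘ G2`: one copy of `G1` together with one copy of `G2`
for each vertex `i` of `G1`, where `i` is joined to all vertices of its copy. -/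
def corona {V1 V2 : Type*} (G1 : SimpleGraph V1) (G2 : SimpleGraph V2) :
    SimpleGraph (V1 ⊕ V1 × V2) :=
  SimpleGraph.fromRel (fun a b =>
    match a, b with
    | .inl a, .inl b => G1.Adj a b
    | .inl a, .inr (i, _) => a = i
    | .inr _, .inl _ => False
    | .inr (i, x), .inr (j, y) => i = j ∧ G2.Adj x y)

/-- The `k`-subdivision `G^{1/k}` of `G`: every edge is replaced by a path of length
`k`, the internal vertices of the path replacing `e` being indexed by `e` and a
position in `Fin (k-1)` (an orientation of `e` is chosen via `Quot.out`). -/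
noncomputable def kSubdivision {V : Type*} (G : SimpleGraph V) (k : ℕ) :
    SimpleGraph (V ⊕ G.edgeSet × Fin (k - 1)) :=
  SimpleGraph.fromRel (fun a b =>
    match a, b with
    | .inl x, .inl y => k ≤ 1 ∧ G.Adj x y
    | .inl x, .inr (e, i) =>
        (x = (Quot.out (e : Sym2 V)).1 ∧ (i : ℕ) = 0) ∨
        (x = (Quot.out (e : Sym2 V)).2 ∧ (i : ℕ) = k - 2)
    | .inr _, .inl _ => False
    | .inr (e, i), .inr (f, j) => e = f ∧ (j : ℕ) = (i : ℕ) + 1)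

set_option linter.unusedSectionVars false

section Aux

variable {V : Type*} (G : SimpleGraph V) (u v : V)

lemma subdivide_adj_some_some {a b : V} :
    (subdivide G u v).Adj (some a) (some b) ↔ G.Adj a b ∧ ¬(s(a, b) = s(u, v)) := by
  simp only [subdivide, fromRel_adj]
  constructor
  · rintro ⟨hne, ⟨h1, h2⟩ | ⟨h1, h2⟩⟩
    · exact ⟨h1, h2⟩
    · exact ⟨h1.symm, by rwa [Sym2.eq_swap]⟩
  · rintro ⟨h1, h2⟩
    exact ⟨by simpa using h1.ne, Or.inl ⟨h1, h2⟩⟩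

lemma subdivide_adj_some_none {a : V} :
    (subdivide G u v).Adj (some a) none ↔ a = u ∨ a = v := by
  simp only [subdivide, fromRel_adj]
  constructor
  · rintro ⟨hne, h | h⟩
    · exact h
    · exact h.elim
  · intro h; exact ⟨by simp, Or.inl h⟩

lemma subdivide_adj_none_some {a : V} :
    (subdivide G u v).Adj none (some a) ↔ a = u ∨ a = v := by
  rw [adj_comm]; exact subdivide_adj_some_none G u v

variable [Fintype V]

lemma sdeg_subdivide_none (huv : G.Adj u v) : sdeg (subdivide G u v) none = 2 := by
  have h : (subdivide G u v).neighborSet none = {some u, some v} := by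
    ext y
    cases y with
    | none => simp [neighborSet]
    | some a =>
      simp only [mem_neighborSet, subdivide_adj_none_some, Set.mem_insert_iff,
        Set.mem_singleton_iff, Option.some.injEq]
  rw [sdeg, h, Set.ncard_pair (by simpa using huv.ne)]

lemma sdeg_subdivide_some_left (huv : G.Adj u v) :
    sdeg (subdivide G u v) (some u) = sdeg G u := by
  have h : (subdivide G u v).neighborSet (some u) =
      insert none (some '' (G.neighborSet u \ {v})) := by
    ext y
    cases y with
    | none => simp [mem_neighborSet, subdivide_adj_some_none]
    | some b =>
      simp only [mem_neighborSet, subdivide_adj_some_some, Set.mem_insert_iff,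
        Set.mem_image, Set.mem_diff, Set.mem_singleton_iff, Option.some.injEq]
      constructor
      · rintro ⟨h1, h2⟩
        refine Or.inr ⟨b, ⟨h1, ?_⟩, rfl⟩
        rintro rfl; exact h2 rfl
      · rintro (h | ⟨c, ⟨h1, h2⟩, rfl⟩)
        · exact absurd h (by simp)
        · refine ⟨h1, fun hc => h2 ?_⟩
          rw [Sym2.congr_right] at hc; exact hc
  rw [sdeg, h, Set.ncard_insert_of_notMem (by simp) (Set.toFinite _),
    Set.ncard_image_of_injective _ (Option.some_injective V)]
  rw [sdeg, ← Set.ncard_diff_singleton_add_one (show v ∈ G.neighborSet u from huv) (Set.toFinite _)]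

lemma subdivide_comm : subdivide G u v = subdivide G v u := by
  ext a b
  cases a <;> cases b <;>
    simp only [subdivide, fromRel_adj, Sym2.eq_swap (a := u) (b := v)] <;> tauto

lemma sdeg_subdivide_some (huv : G.Adj u v) (x : V) :
    sdeg (subdivide G u v) (some x) = sdeg G x := by
  by_cases hxu : x = u
  · subst hxu; exact sdeg_subdivide_some_left G x v huv
  by_cases hxv : x = v
  · subst hxv
    rw [subdivide_comm]
    exact sdeg_subdivide_some_left G x u huv.symm
  have h : (subdivide G u v).neighborSet (some x) = some '' (G.neighborSet x) := by
    ext y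
    cases y with
    | none => simp [mem_neighborSet, subdivide_adj_some_none, hxu, hxv]
    | some b =>
      simp only [mem_neighborSet, subdivide_adj_some_some, Set.mem_image,
        Option.some.injEq]
      constructor
      · rintro ⟨h1, _⟩; exact ⟨b, h1, rfl⟩
      · rintro ⟨c, h1, rfl⟩
        refine ⟨h1, fun hc => ?_⟩
        rw [Sym2.eq_iff] at hc
        rcases hc with ⟨rfl, rfl⟩ | ⟨rfl, rfl⟩
        · exact hxu rfl
        · exact hxv rfl
  rw [sdeg, h, Set.ncard_image_of_injective _ (Option.some_injective V), sdeg]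

lemma strongDominationNumber_le {V : Type*} {G : SimpleGraph V} {D : Set V}
    (h : IsStrongDominatingSet G D) : strongDominationNumber G ≤ D.ncard :=
  Nat.sInf_le ⟨D, h, rfl⟩

lemma exists_min_sds {V : Type*} (G : SimpleGraph V) :
    ∃ D : Set V, IsStrongDominatingSet G D ∧ D.ncard = strongDominationNumber G := by
  have hne : {n | ∃ D : Set V, IsStrongDominatingSet G D ∧ D.ncard = n}.Nonempty :=
    ⟨(Set.univ : Set V).ncard, Set.univ, fun x hx => absurd (Set.mem_univ x) hx, rfl⟩
  obtain ⟨D, hD, hc⟩ := Nat.sInf_mem hne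
  exact ⟨D, hD, hc⟩

lemma subdivide_adj_of (huv : G.Adj u v) {a y : V} (h : G.Adj a y)
    (h2 : ¬(a = u ∧ y = v)) (h3 : ¬(a = v ∧ y = u)) :
    (subdivide G u v).Adj (some a) (some y) :=
  (subdivide_adj_some_some G u v).mpr ⟨h, fun hc => by rw [Sym2.eq_iff] at hc; tauto⟩

lemma upper_helper (huv : G.Adj u v) {D : Set V} (hD : IsStrongDominatingSet G D)
    {D' : Set (Option V)} (hsub : ∀ a ∈ D, some a ∈ D')
    (hnone : (none : Option V) ∈ D' ∨ ∃ y ∈ D', (subdivide G u v).Adj none y ∧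
      sdeg (subdivide G u v) none ≤ sdeg (subdivide G u v) y)
    (hu : some u ∈ D' ∨ ∃ y ∈ D', (subdivide G u v).Adj (some u) y ∧
      sdeg (subdivide G u v) (some u) ≤ sdeg (subdivide G u v) y)
    (hv : some v ∈ D' ∨ ∃ y ∈ D', (subdivide G u v).Adj (some v) y ∧
      sdeg (subdivide G u v) (some v) ≤ sdeg (subdivide G u v) y) :
    IsStrongDominatingSet (subdivide G u v) D' := by
  intro x hx
  cases x with
  | none => rcases hnone with h | h
            · exact absurd h hx
            · exact h
  | some a =>
    by_cases hau : a = u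
    · subst hau
      rcases hu with h | h
      · exact absurd h hx
      · exact h
    by_cases hav : a = v
    · subst hav
      rcases hv with h | h
      · exact absurd h hx
      · exact h
    have haD : a ∉ D := fun h => hx (hsub a h)
    obtain ⟨y, hyD, hadj, hdeg⟩ := hD a haD
    refine ⟨some y, hsub y hyD, subdivide_adj_of G u v huv hadj (by tauto) (by tauto), ?_⟩
    rw [sdeg_subdivide_some G u v huv, sdeg_subdivide_some G u v huv]
    exact hdeg

theorem aux_main {V : Type*} [Fintype V]
    (G : SimpleGraph V) (u v : V) (huv : G.Adj u v) :
    strongDominationNumber G ≤ strongDominationNumber (subdivide G u v) ∧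
    strongDominationNumber (subdivide G u v) ≤ strongDominationNumber G + 1 := by
  have hune : u ≠ v := huv.ne
  constructor
  · -- lower bound
    obtain ⟨D', hD', hc'⟩ := exists_min_sds (subdivide G u v)
    set P : Set V := {a | some a ∈ D'} with hP
    by_cases hw : (none : Option V) ∈ D'
    · set z : V := if sdeg G v ≤ sdeg G u then u else v with hz
      have hzuv : z = u ∨ z = v := by rw [hz]; split <;> simp
      have hsds : IsStrongDominatingSet G (P ∪ {z}) := by
        intro x hx
        have hxP : some x ∉ D' := fun h => hx (Or.inl h)
        have hxz : x ≠ z := fun h => hx (Or.inr h)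
        obtain ⟨y, hyD, hadj, hdeg⟩ := hD' (some x) hxP
        cases y with
        | some b =>
          refine ⟨b, Or.inl hyD, ((subdivide_adj_some_some G u v).mp hadj).1, ?_⟩
          rwa [sdeg_subdivide_some G u v huv, sdeg_subdivide_some G u v huv] at hdeg
        | none =>
          rcases (subdivide_adj_some_none G u v).mp hadj with hxu | hxv
          · have hcnd : ¬ (sdeg G v ≤ sdeg G u) := fun hc =>
              hxz (by rw [hz, if_pos hc, hxu])
            have hzv : z = v := by rw [hz, if_neg hcnd]
            refine ⟨v, Or.inr (by simp [hzv]), by rw [hxu]; exact huv, ?_⟩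
            rw [hxu]
            exact le_of_not_ge hcnd
          · have hzu : z = u := by
              rcases hzuv with h | h
              · exact h
              · exact absurd (hxv.trans h.symm) hxz
            have hcnd : sdeg G v ≤ sdeg G u := by
              by_contra hcnd
              rw [hz, if_neg hcnd] at hzu
              exact hune hzu.symm
            refine ⟨u, Or.inr (by simp [hzu]), by rw [hxv]; exact huv.symm, ?_⟩
            rw [hxv]
            exact hcnd
      have hDeq : D' = insert none (some '' P) := by
        ext y
        cases y with
        | none => simp [hw]
        | some a => simp [hP]
      have hcard : (P ∪ {z}).ncard ≤ D'.ncard := by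
        rw [hDeq, Set.ncard_insert_of_notMem (by simp) (Set.toFinite _),
          Set.ncard_image_of_injective _ (Option.some_injective V)]
        calc (P ∪ {z}).ncard ≤ P.ncard + ({z} : Set V).ncard := Set.ncard_union_le _ _
          _ = P.ncard + 1 := by rw [Set.ncard_singleton]
      calc strongDominationNumber G ≤ (P ∪ {z}).ncard := strongDominationNumber_le hsds
        _ ≤ D'.ncard := hcard
        _ = strongDominationNumber (subdivide G u v) := hc'
    · have hsds : IsStrongDominatingSet G P := by
        intro x hx
        obtain ⟨y, hyD, hadj, hdeg⟩ := hD' (some x) hx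
        cases y with
        | some b =>
          refine ⟨b, hyD, ((subdivide_adj_some_some G u v).mp hadj).1, ?_⟩
          rwa [sdeg_subdivide_some G u v huv, sdeg_subdivide_some G u v huv] at hdeg
        | none => exact absurd hyD hw
      have hDeq : D' = some '' P := by
        ext y
        cases y with
        | none => simp [hw]
        | some a => simp [hP]
      calc strongDominationNumber G ≤ P.ncard := strongDominationNumber_le hsds
        _ = D'.ncard := by
            rw [hDeq, Set.ncard_image_of_injective _ (Option.some_injective V)]
        _ = strongDominationNumber (subdivide G u v) := hc'
  · -- upper bound
    obtain ⟨D, hD, hc⟩ := exists_min_sds G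
    have hmem : ∀ z : Option V, ∀ a ∈ D, some a ∈ some '' D ∪ {z} :=
      fun z a ha => Or.inl ⟨a, ha, rfl⟩
    have hcard : ∀ z : Option V, (some '' D ∪ {z}).ncard ≤ strongDominationNumber G + 1 := by
      intro z
      calc (some '' D ∪ {z}).ncard ≤ (some '' D).ncard + ({z} : Set (Option V)).ncard :=
            Set.ncard_union_le _ _
        _ = D.ncard + 1 := by
            rw [Set.ncard_image_of_injective _ (Option.some_injective V), Set.ncard_singleton]
        _ = strongDominationNumber G + 1 := by rw [hc]
    have key : ∃ D' : Set (Option V), IsStrongDominatingSet (subdivide G u v) D' ∧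
        D'.ncard ≤ strongDominationNumber G + 1 := by
      by_cases hfU : u ∈ D ∨ ∃ y ∈ D, y ≠ v ∧ G.Adj u y ∧ sdeg G u ≤ sdeg G y
      · by_cases hfV : v ∈ D ∨ ∃ y ∈ D, y ≠ u ∧ G.Adj v y ∧ sdeg G v ≤ sdeg G y
        · -- both fine: add the new vertex
          refine ⟨some '' D ∪ {none}, upper_helper G u v huv hD (hmem none)
            (Or.inl (Or.inr rfl)) ?_ ?_, hcard none⟩
          · rcases hfU with h | ⟨y, hyD, hyv, hadj, hdeg⟩
            · exact Or.inl (hmem none u h)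
            · refine Or.inr ⟨some y, hmem none y hyD,
                subdivide_adj_of G u v huv hadj (fun h => hyv h.2) (fun h => hune h.1), ?_⟩
              rwa [sdeg_subdivide_some G u v huv, sdeg_subdivide_some G u v huv]
          · rcases hfV with h | ⟨y, hyD, hyu, hadj, hdeg⟩
            · exact Or.inl (hmem none v h)
            · refine Or.inr ⟨some y, hmem none y hyD,
                subdivide_adj_of G u v huv hadj (fun h => hune h.1.symm) (fun h => hyu h.2), ?_⟩
              rwa [sdeg_subdivide_some G u v huv, sdeg_subdivide_some G u v huv]
        · -- v not fine: u ∈ D and sdeg v ≤ sdeg u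
          have hvD : v ∉ D := fun h => hfV (Or.inl h)
          obtain ⟨y, hyD, hadj, hdeg⟩ := hD v hvD
          have hyu : y = u := by
            by_contra h
            exact hfV (Or.inr ⟨y, hyD, h, hadj, hdeg⟩)
          rw [hyu] at hyD hdeg
          by_cases hdu : 2 ≤ sdeg G u
          · -- add v
            refine ⟨some '' D ∪ {some v}, upper_helper G u v huv hD (hmem (some v))
              ?_ (Or.inl (hmem _ u hyD)) (Or.inl (Or.inr rfl)), hcard (some v)⟩
            refine Or.inr ⟨some u, hmem _ u hyD,
              (subdivide_adj_none_some G u v).mpr (Or.inl rfl), ?_⟩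
            rw [sdeg_subdivide_none G u v huv, sdeg_subdivide_some G u v huv]
            exact hdu
          · -- sdeg u ≤ 1: add the new vertex
            refine ⟨some '' D ∪ {none}, upper_helper G u v huv hD (hmem none)
              (Or.inl (Or.inr rfl)) (Or.inl (hmem _ u hyD)) ?_, hcard none⟩
            refine Or.inr ⟨none, Or.inr rfl,
              (subdivide_adj_some_none G u v).mpr (Or.inr rfl), ?_⟩
            rw [sdeg_subdivide_none G u v huv, sdeg_subdivide_some G u v huv]
            omega
      · -- u not fine: v ∈ D and sdeg u ≤ sdeg v
        have huD : u ∉ D := fun h => hfU (Or.inl h)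
        obtain ⟨y, hyD, hadj, hdeg⟩ := hD u huD
        have hyv : y = v := by
          by_contra h
          exact hfU (Or.inr ⟨y, hyD, h, hadj, hdeg⟩)
        rw [hyv] at hyD hdeg
        by_cases hdv : 2 ≤ sdeg G v
        · -- add u
          refine ⟨some '' D ∪ {some u}, upper_helper G u v huv hD (hmem (some u))
            ?_ (Or.inl (Or.inr rfl)) (Or.inl (hmem _ v hyD)), hcard (some u)⟩
          refine Or.inr ⟨some v, hmem _ v hyD,
            (subdivide_adj_none_some G u v).mpr (Or.inr rfl), ?_⟩
          rw [sdeg_subdivide_none G u v huv, sdeg_subdivide_some G u v huv]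
          exact hdv
        · -- add the new vertex
          refine ⟨some '' D ∪ {none}, upper_helper G u v huv hD (hmem none)
            (Or.inl (Or.inr rfl)) ?_ (Or.inl (hmem _ v hyD)), hcard none⟩
          refine Or.inr ⟨none, Or.inr rfl,
            (subdivide_adj_some_none G u v).mpr (Or.inl rfl), ?_⟩
          rw [sdeg_subdivide_none G u v huv, sdeg_subdivide_some G u v huv]
          omega
    obtain ⟨D', hsds, hle⟩ := key
    exact le_trans (strongDominationNumber_le hsds) hle

end Aux

/-- Edge subdivision: `γst(G) ≤ γst(G_e) ≤ γst(G) + 1`. -/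
theorem strongDominationNumber_subdivide_bounds {V : Type*} [Fintype V]
    (G : SimpleGraph V) (u v : V) (huv : G.Adj u v) :
    strongDominationNumber G ≤ strongDominationNumber (subdivide G u v) ∧
    strongDominationNumber (subdivide G u v) ≤ strongDominationNumber G + 1 :=
  aux_main G u v huv
end

section
/- For every positive integer r, the strong domination number of the 3r-subdivision of the 5-cycle satisfies γst(C_5^{1/(3r)}) = 5r. -/
open SimpleGraph

section Aux

variable {V : Type*} (G : SimpleGraph V) (k : ℕ)


lemma ksub_adj_inl_inl (hk : 2 ≤ k) (x y : V) :
    ¬ (kSubdivision G k).Adj (Sum.inl x) (Sum.inl y) := by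
  simp only [kSubdivision, fromRel_adj]
  rintro ⟨-, h | h⟩ <;> omega

lemma ksub_adj_inl_inr (x : V) (e : G.edgeSet) (i : Fin (k-1)) :
    (kSubdivision G k).Adj (Sum.inl x) (Sum.inr (e, i)) ↔
      (x = (Quot.out (e : Sym2 V)).1 ∧ (i : ℕ) = 0) ∨
      (x = (Quot.out (e : Sym2 V)).2 ∧ (i : ℕ) = k - 2) := by
  simp [kSubdivision, fromRel_adj]

lemma ksub_adj_inr_inr (e f : G.edgeSet) (i j : Fin (k-1)) :
    (kSubdivision G k).Adj (Sum.inr (e, i)) (Sum.inr (f, j)) ↔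
      e = f ∧ ((j : ℕ) = (i : ℕ) + 1 ∨ (i : ℕ) = (j : ℕ) + 1) := by
  simp only [kSubdivision, fromRel_adj]
  constructor
  · rintro ⟨-, h | h⟩
    · exact ⟨h.1, Or.inl h.2⟩
    · exact ⟨h.1.symm, Or.inr h.2⟩
  · rintro ⟨rfl, h | h⟩
    · exact ⟨by simp [Prod.ext_iff, Fin.ext_iff]; omega, Or.inl ⟨rfl, h⟩⟩
    · exact ⟨by simp [Prod.ext_iff, Fin.ext_iff]; omega, Or.inr ⟨rfl, h⟩⟩

lemma mem_nbhd {a b : V ⊕ G.edgeSet × Fin (k-1)} :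
    a ∈ (kSubdivision G k).neighborSet b ↔ (kSubdivision G k).Adj b a := Iff.rfl


lemma ksub_sdeg_inr (hk : 3 ≤ k) (e : G.edgeSet) (i : Fin (k-1)) :
    sdeg (kSubdivision G k) (Sum.inr (e, i)) = 2 := by
  have hi : (i : ℕ) < k - 1 := i.2
  rcases Nat.lt_or_ge 0 (i : ℕ) with h0 | h0
  · rcases Nat.lt_or_ge (i : ℕ) (k-2) with h1 | h1
    · -- middle
      have hset : (kSubdivision G k).neighborSet (Sum.inr (e, i)) =
          {Sum.inr (e, ⟨(i:ℕ)-1, by omega⟩), Sum.inr (e, ⟨(i:ℕ)+1, by omega⟩)} := by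
        ext a
        rcases a with x | ⟨f, j⟩
        · simp only [mem_nbhd, (kSubdivision G k).adj_comm, ksub_adj_inl_inr]
          simp [Set.mem_insert_iff, show (i:ℕ) ≠ 0 by omega, show (i:ℕ) ≠ k - 2 by omega]
        · simp only [mem_nbhd, ksub_adj_inr_inr]
          rcases eq_or_ne e f with rfl | hne
          · simp [Set.mem_insert_iff, Prod.ext_iff, Fin.ext_iff]; omega
          · simp [Set.mem_insert_iff, Prod.ext_iff, hne, Ne.symm hne]
      rw [sdeg, hset, Set.ncard_pair]
      intro h
      simp only [Sum.inr.injEq, Prod.mk.injEq, Fin.mk.injEq] at h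
      omega
    · -- i = k - 2
      have hik : (i:ℕ) = k - 2 := by omega
      have hset : (kSubdivision G k).neighborSet (Sum.inr (e, i)) =
          {Sum.inr (e, ⟨(i:ℕ)-1, by omega⟩), Sum.inl (Quot.out (e : Sym2 V)).2} := by
        ext a
        rcases a with x | ⟨f, j⟩
        · simp only [mem_nbhd, (kSubdivision G k).adj_comm, ksub_adj_inl_inr]
          simp [Set.mem_insert_iff, hik, show k - 2 ≠ 0 by omega]
        · simp only [mem_nbhd, ksub_adj_inr_inr]
          rcases eq_or_ne e f with rfl | hne
          · simp [Set.mem_insert_iff, Prod.ext_iff, Fin.ext_iff]; omega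
          · simp [Set.mem_insert_iff, Prod.ext_iff, hne, Ne.symm hne]
      rw [sdeg, hset, Set.ncard_pair]
      simp
  · -- i = 0
    have hset : (kSubdivision G k).neighborSet (Sum.inr (e, i)) =
        {Sum.inr (e, ⟨1, by omega⟩), Sum.inl (Quot.out (e : Sym2 V)).1} := by
      ext a
      rcases a with x | ⟨f, j⟩
      · simp only [mem_nbhd, (kSubdivision G k).adj_comm, ksub_adj_inl_inr]
        simp [Set.mem_insert_iff, show (i:ℕ) = 0 by omega, show k - 2 ≠ 0 by omega, show (0:ℕ) ≠ k - 2 by omega]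
      · simp only [mem_nbhd, ksub_adj_inr_inr]
        rcases eq_or_ne e f with rfl | hne
        · simp [Set.mem_insert_iff, Prod.ext_iff, Fin.ext_iff]; omega
        · simp [Set.mem_insert_iff, Prod.ext_iff, hne, Ne.symm hne]
    rw [sdeg, hset, Set.ncard_pair]
    simp

variable [DecidableEq V]

lemma ksub_nbhd_inl (hk : 3 ≤ k) (x : V) :
    (kSubdivision G k).neighborSet (Sum.inl x) =
      (fun e : G.edgeSet => if x = (Quot.out (e : Sym2 V)).1
          then Sum.inr (e, (⟨0, by omega⟩ : Fin (k-1)))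
          else Sum.inr (e, (⟨k-2, by omega⟩ : Fin (k-1)))) ''
        {e : G.edgeSet | x ∈ (e : Sym2 V)} := by
  ext a
  constructor
  · intro ha
    rcases a with y | ⟨e, i⟩
    · exact absurd ha (ksub_adj_inl_inl G k (by omega) x y)
    · rw [mem_nbhd, ksub_adj_inl_inr] at ha
      have hout : (e : Sym2 V) = s((Quot.out (e:Sym2 V)).1, (Quot.out (e:Sym2 V)).2) := by
        conv_lhs => rw [← (e : Sym2 V).out_eq]
      have hne : (Quot.out (e:Sym2 V)).1 ≠ (Quot.out (e:Sym2 V)).2 := by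
        intro h
        have : G.Adj (Quot.out (e:Sym2 V)).1 (Quot.out (e:Sym2 V)).2 := by
          rw [← G.mem_edgeSet, ← hout]; exact e.2
        exact this.ne h
      rcases ha with ⟨hx, hi⟩ | ⟨hx, hi⟩
      · refine ⟨e, ?_, ?_⟩
        · rw [Set.mem_setOf_eq, hout, Sym2.mem_iff]; exact Or.inl hx
        · simp only [if_pos hx, Sum.inr.injEq, Prod.mk.injEq, true_and]
          exact Fin.ext hi.symm
      · refine ⟨e, ?_, ?_⟩
        · rw [Set.mem_setOf_eq, hout, Sym2.mem_iff]; exact Or.inr hx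
        · have hx1 : x ≠ (Quot.out (e:Sym2 V)).1 := fun h => hne (h.symm.trans hx)
          simp only [if_neg hx1, Sum.inr.injEq, Prod.mk.injEq, true_and]
          exact Fin.ext hi.symm
  · rintro ⟨e, he, rfl⟩
    have hout : (e : Sym2 V) = s((Quot.out (e:Sym2 V)).1, (Quot.out (e:Sym2 V)).2) := by
      conv_lhs => rw [← (e : Sym2 V).out_eq]
    rw [Set.mem_setOf_eq, hout, Sym2.mem_iff] at he
    simp only []
    split_ifs with h
    · rw [mem_nbhd, ksub_adj_inl_inr]
      exact Or.inl ⟨h, rfl⟩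
    · rw [mem_nbhd, ksub_adj_inl_inr]
      exact Or.inr ⟨he.resolve_left h, rfl⟩

lemma ksub_sdeg_inl (hk : 3 ≤ k) (x : V) :
    sdeg (kSubdivision G k) (Sum.inl x) = {e : G.edgeSet | x ∈ (e : Sym2 V)}.ncard := by
  rw [sdeg, ksub_nbhd_inl G k hk x]
  apply Set.ncard_image_of_injOn
  intro e he f hf h
  simp only [] at h
  split_ifs at h <;>
    · rw [Sum.inr.injEq, Prod.mk.injEq] at h
      exact h.1


lemma lb_card {W : Type*} [Finite W] (G : SimpleGraph W) (hdeg : ∀ v, sdeg G v ≤ 2)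
    (D : Set W) (hD : IsStrongDominatingSet G D) : Nat.card W ≤ 3 * D.ncard := by
  classical
  cases nonempty_fintype W
  have hDfin : D.Finite := Set.toFinite D
  set f : W → Finset W := fun y => insert y (G.neighborSet y).toFinite.toFinset with hf
  have cover : (Finset.univ : Finset W) ⊆ hDfin.toFinset.biUnion f := by
    intro x _
    rw [Finset.mem_biUnion]
    by_cases hx : x ∈ D
    · exact ⟨x, hDfin.mem_toFinset.mpr hx, Finset.mem_insert_self x _⟩
    · obtain ⟨y, hyD, hadj, -⟩ := hD x hx
      refine ⟨y, hDfin.mem_toFinset.mpr hyD, Finset.mem_insert_of_mem ?_⟩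
      rw [Set.Finite.mem_toFinset]
      exact hadj.symm
  have hbound : ∀ y, (f y).card ≤ 3 := by
    intro y
    calc (f y).card ≤ (G.neighborSet y).toFinite.toFinset.card + 1 := Finset.card_insert_le _ _
    _ ≤ 3 := by
        have := hdeg y
        rw [sdeg, Set.ncard_eq_toFinset_card _ (G.neighborSet y).toFinite] at this
        omega
  calc Nat.card W = (Finset.univ : Finset W).card := by
        rw [Nat.card_eq_fintype_card, Finset.card_univ]
    _ ≤ (hDfin.toFinset.biUnion f).card := Finset.card_le_card cover
    _ ≤ ∑ y ∈ hDfin.toFinset, (f y).card := Finset.card_biUnion_le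
    _ ≤ ∑ y ∈ hDfin.toFinset, 3 := Finset.sum_le_sum (fun y _ => hbound y)
    _ = 3 * D.ncard := by
        rw [Finset.sum_const, smul_eq_mul, mul_comm, Set.ncard_eq_toFinset_card D hDfin]

lemma c5_inc (x : Fin 5) :
    {e : (SimpleGraph.cycleGraph 5).edgeSet | x ∈ (e : Sym2 (Fin 5))}.ncard = 2 := by
  have hadj : ∀ z : Fin 5, (cycleGraph 5).Adj z (z+1) ∧ (cycleGraph 5).Adj z (z-1) := by decide
  have key : ∀ (z a b : Fin 5), (cycleGraph 5).Adj a b →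
      (z ∈ s(a,b) ↔ s(a,b) = s(z,z+1) ∨ s(a,b) = s(z,z-1)) := by decide
  have hset : {e : (cycleGraph 5).edgeSet | x ∈ (e : Sym2 (Fin 5))} =
      {⟨s(x,x+1), (cycleGraph 5).mem_edgeSet.mpr (hadj x).1⟩,
       ⟨s(x,x-1), (cycleGraph 5).mem_edgeSet.mpr (hadj x).2⟩} := by
    ext ⟨e, he⟩
    revert he
    induction e using Sym2.ind with
    | _ a b =>
      intro he
      simp only [Set.mem_setOf_eq, Set.mem_insert_iff, Set.mem_singleton_iff, Subtype.mk.injEq]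
      exact key x a b ((cycleGraph 5).mem_edgeSet.mp he)
  have hne : ∀ z : Fin 5, (s(z,z+1) : Sym2 (Fin 5)) ≠ s(z,z-1) := by decide
  rw [hset, Set.ncard_pair]
  simp only [ne_eq, Subtype.mk.injEq]
  exact hne x


lemma c5_edge_card : Nat.card (SimpleGraph.cycleGraph 5).edgeSet = 5 := by
  rw [Nat.card_eq_fintype_card, ← Set.toFinset_card]
  decide

section Main

variable (r : ℕ)

lemma sdeg_all (hr : 1 ≤ r) :
    ∀ a : Fin 5 ⊕ (SimpleGraph.cycleGraph 5).edgeSet × Fin (3*r - 1),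
      sdeg (kSubdivision (SimpleGraph.cycleGraph 5) (3*r)) a = 2 := by
  intro a
  rcases a with x | ⟨e, i⟩
  · rw [ksub_sdeg_inl _ _ (by omega) x, c5_inc]
  · exact ksub_sdeg_inr _ _ (by omega) e i

noncomputable def gmap : (SimpleGraph.cycleGraph 5).edgeSet × Fin (r-1) →
    Fin 5 ⊕ (SimpleGraph.cycleGraph 5).edgeSet × Fin (3*r - 1) :=
  fun p => Sum.inr (p.1, ⟨3*(p.2:ℕ)+2, by have := p.2.isLt; omega⟩)

noncomputable def Dset : Set (Fin 5 ⊕ (SimpleGraph.cycleGraph 5).edgeSet × Fin (3*r - 1)) :=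
  Set.range Sum.inl ∪ Set.range (gmap r)

lemma gmap_inj : Function.Injective (gmap r) := by
  rintro ⟨e, t⟩ ⟨f, u⟩ h
  simp only [gmap, Sum.inr.injEq, Prod.mk.injEq, Fin.mk.injEq] at h
  obtain ⟨h1, h2⟩ := h
  refine Prod.ext h1 (Fin.ext ?_)
  dsimp only at h2 ⊢
  omega

lemma Dset_ncard (hr : 1 ≤ r) : (Dset r).ncard = 5 * r := by
  have hdisj : Disjoint (Set.range (Sum.inl : Fin 5 →
      Fin 5 ⊕ (SimpleGraph.cycleGraph 5).edgeSet × Fin (3*r - 1))) (Set.range (gmap r)) := by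
    rw [Set.disjoint_left]
    rintro a ⟨x, rfl⟩ ⟨p, hp⟩
    simp only [gmap] at hp
    exact Sum.inr_ne_inl hp
  rw [Dset, Set.ncard_union_eq hdisj (Set.toFinite _) (Set.toFinite _)]
  have h1 : (Set.range (Sum.inl : Fin 5 →
      Fin 5 ⊕ (SimpleGraph.cycleGraph 5).edgeSet × Fin (3*r - 1))).ncard = 5 := by
    rw [← Nat.card_coe_set_eq, Nat.card_range_of_injective Sum.inl_injective,
      Nat.card_eq_fintype_card, Fintype.card_fin]
  have h2 : (Set.range (gmap r)).ncard = 5 * (r - 1) := by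
    rw [← Nat.card_coe_set_eq, Nat.card_range_of_injective (gmap_inj r),
      Nat.card_prod, c5_edge_card, Nat.card_eq_fintype_card, Fintype.card_fin]
  rw [h1, h2]
  omega

lemma Dset_dom (hr : 1 ≤ r) :
    IsStrongDominatingSet (kSubdivision (SimpleGraph.cycleGraph 5) (3*r)) (Dset r) := by
  intro a ha
  rcases a with x | ⟨e, i⟩
  · exact absurd (Or.inl ⟨x, rfl⟩) ha
  · have hilt : (i : ℕ) < 3*r - 1 := i.isLt
    have hi2 : (i : ℕ) % 3 ≠ 2 := by
      intro h
      apply ha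
      right
      refine ⟨(e, ⟨(i:ℕ)/3, by omega⟩), ?_⟩
      simp only [gmap, Sum.inr.injEq, Prod.mk.injEq, true_and]
      exact Fin.ext (by simp; omega)
    by_cases h0 : (i : ℕ) = 0
    · refine ⟨Sum.inl (Quot.out (e : Sym2 (Fin 5))).1, Or.inl ⟨_, rfl⟩, ?_, ?_⟩
      · rw [(kSubdivision _ _).adj_comm, ksub_adj_inl_inr]
        exact Or.inl ⟨rfl, h0⟩
      · rw [sdeg_all r hr, sdeg_all r hr]
    · by_cases hk2 : (i : ℕ) = 3*r - 2
      · refine ⟨Sum.inl (Quot.out (e : Sym2 (Fin 5))).2, Or.inl ⟨_, rfl⟩, ?_, ?_⟩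
        · rw [(kSubdivision _ _).adj_comm, ksub_adj_inl_inr]
          exact Or.inr ⟨rfl, hk2⟩
        · rw [sdeg_all r hr, sdeg_all r hr]
      · by_cases h3 : (i : ℕ) % 3 = 0
        · refine ⟨Sum.inr (e, ⟨(i:ℕ) - 1, by omega⟩), ?_, ?_, ?_⟩
          · right
            refine ⟨(e, ⟨(i:ℕ)/3 - 1, by omega⟩), ?_⟩
            simp only [gmap, Sum.inr.injEq, Prod.mk.injEq, Fin.mk.injEq, true_and]
            omega
          · rw [ksub_adj_inr_inr]
            exact ⟨rfl, Or.inr (by simp; omega)⟩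
          · rw [sdeg_all r hr, sdeg_all r hr]
        · -- i % 3 = 1
          have h1 : (i : ℕ) % 3 = 1 := by omega
          refine ⟨Sum.inr (e, ⟨(i:ℕ) + 1, by omega⟩), ?_, ?_, ?_⟩
          · right
            refine ⟨(e, ⟨((i:ℕ) - 1)/3, by omega⟩), ?_⟩
            simp only [gmap, Sum.inr.injEq, Prod.mk.injEq, Fin.mk.injEq, true_and]
            omega
          · rw [ksub_adj_inr_inr]
            exact ⟨rfl, Or.inl (by simp)⟩
          · rw [sdeg_all r hr, sdeg_all r hr]

lemma vt_card (hr : 1 ≤ r) :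
    Nat.card (Fin 5 ⊕ (SimpleGraph.cycleGraph 5).edgeSet × Fin (3*r - 1)) = 15 * r := by
  rw [Nat.card_sum, Nat.card_prod, c5_edge_card, Nat.card_eq_fintype_card (α := Fin 5),
    Fintype.card_fin, Nat.card_eq_fintype_card (α := Fin (3*r-1)), Fintype.card_fin]
  omega

end Main
end Aux

/-- `γst(C₅^{1/(3r)}) = 5r` for every positive integer `r`. -/
theorem strongDominationNumber_kSubdivision_cycle_five_three_mul (r : ℕ) (hr : 1 ≤ r) :
    strongDominationNumber (kSubdivision (SimpleGraph.cycleGraph 5) (3 * r)) = 5 * r := by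
  have hmem : 5 * r ∈ {n | ∃ D, IsStrongDominatingSet (kSubdivision (SimpleGraph.cycleGraph 5) (3 * r)) D ∧ D.ncard = n} :=
    ⟨Dset r, Dset_dom r hr, Dset_ncard r hr⟩
  have hlb : ∀ n ∈ {n | ∃ D, IsStrongDominatingSet (kSubdivision (SimpleGraph.cycleGraph 5) (3 * r)) D ∧ D.ncard = n},
      5 * r ≤ n := by
    rintro n ⟨D, hD, rfl⟩
    have h := lb_card _ (fun v => (sdeg_all r hr v).le) D hD
    rw [vt_card r hr] at h
    omega
  exact le_antisymm (Nat.sInf_le hmem) (le_csInf ⟨_, hmem⟩ hlb)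
end

section
/- Let n ≥ 3 with n ≢ 1 (mod 3), and let e = uv be an edge of the path graph P_n incident with a leaf (so deg(u) = 1 and deg(v) = 2). Then γst(P_n − e) = γst(P_n) + deg(u) + deg(v) − 2 = ⌈n/3⌉ + 1; that is, the upper bound of the edge-deletion theorem is attained with equality. -/
open SimpleGraph

section StrongDomAux

open Finset

/-- The pattern of a minimum strong dominating set of a path with `m` vertices
(`0`-indexed): positions `≡ 1 (mod 3)` that are not the last vertex, together with
`3 * (m / 3)` when `3 ∤ m`. -/
def sgood (m i : ℕ) : Prop := (i % 3 = 1 ∧ i + 1 < m) ∨ (m % 3 ≠ 0 ∧ i = 3 * (m / 3))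

instance (m i : ℕ) : Decidable (sgood m i) := by unfold sgood; infer_instance

lemma sgood_dom {m x : ℕ} (hm : 3 ≤ m) (hx : x < m) (h : ¬ sgood m x) :
    ∃ y, (y = x + 1 ∨ y + 1 = x) ∧ sgood m y ∧ 0 < y ∧ y + 1 < m := by
  unfold sgood at h ⊢
  have h3 : x % 3 = 0 ∨ x % 3 = 1 ∨ x % 3 = 2 := by omega
  rcases h3 with h3 | h3 | h3
  · exact ⟨x + 1, Or.inl rfl, Or.inl (by omega), by omega, by omega⟩
  · exact ⟨x - 1, Or.inr (by omega), Or.inr (by omega), by omega, by omega⟩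
  · exact ⟨x - 1, Or.inr (by omega), Or.inl (by omega), by omega, by omega⟩

lemma card_filter_mod3 (m : ℕ) :
    ((range m).filter (fun i => i % 3 = 1)).card = (m + 1) / 3 := by
  induction m with
  | zero => simp
  | succ k ih =>
    rw [range_add_one, filter_insert]
    by_cases hk : k % 3 = 1
    · rw [if_pos hk, card_insert_of_notMem (by simp)]
      omega
    · rw [if_neg hk]
      omega

lemma card_fin_filter (n : ℕ) (q : ℕ → Prop) [DecidablePred q] :
    ((univ : Finset (Fin n)).filter (fun i => q i.val)).card
      = ((range n).filter q).card := by
  apply card_bij (fun (a : Fin n) _ => a.val)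
  · intro a ha
    simp only [mem_filter, mem_univ, true_and] at ha
    simp [a.isLt, ha]
  · intro a _ b _ hab
    exact Fin.ext hab
  · intro b hb
    simp only [mem_filter, mem_range] at hb
    exact ⟨⟨b, hb.1⟩, by simp [hb.2], rfl⟩

lemma card_sgood (m : ℕ) (hm : 1 ≤ m) :
    ((range m).filter (fun i => sgood m i)).card = (m + 2) / 3 := by
  have hsplit : (range m).filter (fun i => sgood m i)
      = ((range m).filter (fun i => i % 3 = 1 ∧ i + 1 < m))
        ∪ ((range m).filter (fun i => m % 3 ≠ 0 ∧ i = 3 * (m / 3))) := by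
    ext i
    simp only [sgood, mem_filter, mem_union]
    change i ∈ (range m).filter (fun i => sgood m i) ↔ _
    rw [Finset.mem_filter]
    simp only [sgood]
    tauto
  have hdisj : Disjoint ((range m).filter (fun i => i % 3 = 1 ∧ i + 1 < m))
      ((range m).filter (fun i => m % 3 ≠ 0 ∧ i = 3 * (m / 3))) := by
    rw [Finset.disjoint_left]
    intro a ha hb
    simp only [mem_filter] at ha hb
    omega
  have h1 : ((range m).filter (fun i => i % 3 = 1 ∧ i + 1 < m))
      = (range (m - 1)).filter (fun i => i % 3 = 1) := by
    ext i
    simp only [mem_filter, mem_range]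
    omega
  by_cases h0 : m % 3 = 0
  · have h2 : ((range m).filter (fun i => m % 3 ≠ 0 ∧ i = 3 * (m / 3))) = ∅ := by
      ext i
      simp [h0]
    rw [hsplit, card_union_of_disjoint hdisj, h1, h2, card_filter_mod3]
    simp only [card_empty]
    omega
  · have h2 : ((range m).filter (fun i => m % 3 ≠ 0 ∧ i = 3 * (m / 3)))
        = {3 * (m / 3)} := by
      ext i
      simp only [mem_filter, mem_range, mem_singleton]
      omega
    rw [hsplit, card_union_of_disjoint hdisj, h1, h2, card_filter_mod3]
    simp only [card_singleton]
    omega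

variable {n : ℕ}

lemma ncard_val_eq_le (c : ℕ) : ({j : Fin n | j.val = c} : Set (Fin n)).ncard ≤ 1 := by
  rw [Set.ncard_le_one (Set.toFinite _)]
  intro a ha b hb
  exact Fin.ext (ha.trans hb.symm)

lemma sdeg_le_two_of_le {G : SimpleGraph (Fin n)} (hle : G ≤ SimpleGraph.pathGraph n)
    (i : Fin n) : sdeg G i ≤ 2 := by
  have hsub : G.neighborSet i
      ⊆ {j : Fin n | j.val = i.val + 1} ∪ {j : Fin n | j.val = i.val - 1} := by
    intro j hj
    have hadj := SimpleGraph.pathGraph_adj.mp (hle hj)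
    rcases hadj with hadj | hadj
    · exact Or.inl (by simpa using hadj.symm)
    · exact Or.inr (by simp; omega)
  calc sdeg G i ≤ ({j : Fin n | j.val = i.val + 1}
        ∪ {j : Fin n | j.val = i.val - 1}).ncard :=
        Set.ncard_le_ncard hsub (Set.toFinite _)
    _ ≤ ({j : Fin n | j.val = i.val + 1} : Set (Fin n)).ncard
        + ({j : Fin n | j.val = i.val - 1} : Set (Fin n)).ncard :=
        Set.ncard_union_le _ _
    _ ≤ 2 := by
        have := ncard_val_eq_le (n := n) (i.val + 1)
        have := ncard_val_eq_le (n := n) (i.val - 1)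
        omega

lemma nbhd_path_internal (i : Fin n) (h1 : 0 < i.val) (h2 : i.val + 1 < n) :
    (SimpleGraph.pathGraph n).neighborSet i
      = {⟨i.val - 1, by omega⟩, ⟨i.val + 1, by omega⟩} := by
  ext j
  simp only [SimpleGraph.mem_neighborSet, SimpleGraph.pathGraph_adj, Set.mem_insert_iff,
    Set.mem_singleton_iff, Fin.ext_iff]
  omega

lemma sdeg_path_internal (i : Fin n) (h1 : 0 < i.val) (h2 : i.val + 1 < n) :
    sdeg (SimpleGraph.pathGraph n) i = 2 := by
  rw [sdeg, nbhd_path_internal i h1 h2,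
    Set.ncard_pair (Fin.ne_of_val_ne (show i.val - 1 ≠ i.val + 1 by omega))]

lemma nbhd_delete_of_ne {G : SimpleGraph (Fin n)} {a b : Fin n} (c : Fin n)
    (h1 : c ≠ a) (h2 : c ≠ b) :
    (G.deleteEdges {s(a, b)}).neighborSet c = G.neighborSet c := by
  ext j
  simp only [SimpleGraph.mem_neighborSet, SimpleGraph.deleteEdges_adj,
    Set.mem_singleton_iff]
  constructor
  · exact fun h => h.1
  · intro h
    refine ⟨h, fun heq => ?_⟩
    rcases Sym2.eq_iff.mp heq with ⟨rfl, rfl⟩ | ⟨rfl, rfl⟩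
    · exact h1 rfl
    · exact h2 rfl

lemma count_le {G : SimpleGraph (Fin n)} {D : Set (Fin n)} (hfin : D.Finite)
    (hdom : ∀ x ∉ D, ∃ y ∈ D, G.Adj x y) :
    n ≤ ∑ y ∈ hfin.toFinset, (1 + sdeg G y) := by
  classical
  have hcover : (univ : Finset (Fin n)) ⊆ hfin.toFinset.biUnion
      (fun y => insert y ((G.neighborSet y).toFinite.toFinset)) := by
    intro x _
    rw [mem_biUnion]
    by_cases hx : x ∈ D
    · exact ⟨x, by simpa using hx, mem_insert_self _ _⟩
    · obtain ⟨y, hyD, hadj⟩ := hdom x hx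
      refine ⟨y, by simpa using hyD, mem_insert_of_mem ?_⟩
      rw [Set.Finite.mem_toFinset]
      exact hadj.symm
  calc n = (univ : Finset (Fin n)).card := by simp
    _ ≤ (hfin.toFinset.biUnion
          (fun y => insert y ((G.neighborSet y).toFinite.toFinset))).card :=
        card_le_card hcover
    _ ≤ ∑ y ∈ hfin.toFinset, (insert y ((G.neighborSet y).toFinite.toFinset)).card :=
        card_biUnion_le
    _ ≤ ∑ y ∈ hfin.toFinset, (1 + sdeg G y) := by
        refine sum_le_sum fun y _ => ?_
        have h1 := card_insert_le y ((G.neighborSet y).toFinite.toFinset)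
        have h2 : sdeg G y = ((G.neighborSet y).toFinite.toFinset).card :=
          Set.ncard_eq_toFinset_card _ _
        omega

lemma sdn_le {V : Type*} (G : SimpleGraph V) {D : Set V}
    (h : IsStrongDominatingSet G D) : strongDominationNumber G ≤ D.ncard :=
  Nat.sInf_le ⟨D, h, rfl⟩

lemma le_sdn {V : Type*} (G : SimpleGraph V) (t : ℕ)
    (h : ∀ D : Set V, IsStrongDominatingSet G D → t ≤ D.ncard) :
    t ≤ strongDominationNumber G := by
  have hne : {k | ∃ D : Set V, IsStrongDominatingSet G D ∧ D.ncard = k}.Nonempty :=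
    ⟨(Set.univ : Set V).ncard, Set.univ, fun x hx => absurd trivial hx, rfl⟩
  unfold strongDominationNumber
  apply le_csInf hne
  rintro k ⟨D, hD, rfl⟩
  exact h D hD

lemma sdn_path (n : ℕ) (hn : 3 ≤ n) :
    strongDominationNumber (SimpleGraph.pathGraph n) = (n + 2) / 3 := by
  classical
  apply le_antisymm
  · have hD : IsStrongDominatingSet (SimpleGraph.pathGraph n)
        ↑((univ : Finset (Fin n)).filter (fun i => sgood n i.val)) := by
      intro x hx
      have hng : ¬ sgood n x.val := by simpa using hx
      obtain ⟨y', hadj, hgood, h0, hlt⟩ := sgood_dom hn x.isLt hng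
      refine ⟨⟨y', by omega⟩, by simpa using hgood, ?_, ?_⟩
      · rw [SimpleGraph.pathGraph_adj]
        simp only []
        omega
      · rw [sdeg_path_internal ⟨y', by omega⟩ h0 hlt]
        exact sdeg_le_two_of_le le_rfl x
    have hle := sdn_le _ hD
    rwa [Set.ncard_coe_finset, card_fin_filter, card_sgood n (by omega)] at hle
  · apply le_sdn
    intro D hD
    have hfin : D.Finite := Set.toFinite D
    have h1 := count_le hfin (fun x hx => by
      obtain ⟨y, hy1, hy2, _⟩ := hD x hx
      exact ⟨y, hy1, hy2⟩)
    have h2 : ∑ y ∈ hfin.toFinset, (1 + sdeg (SimpleGraph.pathGraph n) y)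
        ≤ ∑ _y ∈ hfin.toFinset, 3 := by
      refine sum_le_sum fun y _ => ?_
      have := sdeg_le_two_of_le (le_refl (SimpleGraph.pathGraph n)) y
      omega
    rw [sum_const, smul_eq_mul] at h2
    have h3 : D.ncard = hfin.toFinset.card := Set.ncard_eq_toFinset_card _ _
    omega

lemma sdn_path_del (n : ℕ) (hn : 3 ≤ n) (hmod : n % 3 ≠ 1) (a b : Fin n)
    (ha : a.val = n - 1) (hb : b.val = n - 2) :
    strongDominationNumber ((SimpleGraph.pathGraph n).deleteEdges {s(a, b)})
      = (n + 2) / 3 + 1 := by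
  classical
  set G' := (SimpleGraph.pathGraph n).deleteEdges {s(a, b)} with hG'
  have hle : G' ≤ SimpleGraph.pathGraph n := SimpleGraph.deleteEdges_le _
  have hnbA : G'.neighborSet a = ∅ := by
    ext j
    simp only [hG', SimpleGraph.mem_neighborSet, SimpleGraph.deleteEdges_adj,
      Set.mem_singleton_iff, Set.mem_empty_iff_false, iff_false, not_and, not_not]
    intro hadj
    have hj : j = b := by
      rcases SimpleGraph.pathGraph_adj.mp hadj with h | h
      · omega
      · exact Fin.ext (by omega)
    rw [hj]
  apply le_antisymm
  · -- upper bound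
    by_cases hn3 : n = 3
    · subst hn3
      have hab : (⟨0, by omega⟩ : Fin 3) ≠ a :=
        Fin.ne_of_val_ne (show (0 : ℕ) ≠ a.val by omega)
      have hD : IsStrongDominatingSet G' ({⟨0, by omega⟩, a} : Set (Fin 3)) := by
        intro x hx
        simp only [Set.mem_insert_iff, Set.mem_singleton_iff, not_or] at hx
        have hx1 : x.val = 1 := by
          have h1 : x.val ≠ 0 := fun h => hx.1 (Fin.ext h)
          have h2 : x.val ≠ 2 := fun h => hx.2 (Fin.ext (by omega))
          omega
        refine ⟨⟨0, by omega⟩, Or.inl rfl, ?_, ?_⟩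
        · simp only [hG', SimpleGraph.deleteEdges_adj, Set.mem_singleton_iff]
          constructor
          · rw [SimpleGraph.pathGraph_adj]; omega
          · intro heq
            rcases Sym2.eq_iff.mp heq with ⟨h1, _⟩ | ⟨_, h2⟩
            · rw [Fin.ext_iff] at h1; omega
            · rw [Fin.ext_iff] at h2; omega
        · -- sdeg G' x ≤ sdeg G' ⟨0, _⟩
          have hy : G'.neighborSet ⟨0, by omega⟩ = {j : Fin 3 | j.val = 1} := by
            ext j
            simp only [hG', SimpleGraph.mem_neighborSet, SimpleGraph.deleteEdges_adj,
              Set.mem_singleton_iff, Set.mem_setOf_eq, SimpleGraph.pathGraph_adj]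
            constructor
            · rintro ⟨h, _⟩; omega
            · intro h
              refine ⟨by omega, fun heq => ?_⟩
              rcases Sym2.eq_iff.mp heq with ⟨h1, _⟩ | ⟨_, h2⟩
              · rw [Fin.ext_iff] at h1; omega
              · rw [Fin.ext_iff] at h2; omega
          have hx' : G'.neighborSet x ⊆ {j : Fin 3 | j.val = 0} := by
            intro j hj
            simp only [hG', SimpleGraph.mem_neighborSet, SimpleGraph.deleteEdges_adj,
              Set.mem_singleton_iff, SimpleGraph.pathGraph_adj] at hj
            obtain ⟨hadj, hne⟩ := hj
            simp only [Set.mem_setOf_eq]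
            by_contra hj0
            have hj2 : j.val = 2 := by omega
            exact hne (Sym2.eq_iff.mpr (Or.inr ⟨Fin.ext (by omega), Fin.ext (by omega)⟩))
          have g1 : sdeg G' x ≤ 1 :=
            le_trans (Set.ncard_le_ncard hx' (Set.toFinite _)) (ncard_val_eq_le 0)
          have g2 : sdeg G' ⟨0, by omega⟩ = 1 := by
            rw [sdeg, hy]
            have : ({j : Fin 3 | j.val = 1} : Set (Fin 3)) = {⟨1, by omega⟩} := by
              ext j
              simp [Fin.ext_iff]
            rw [this, Set.ncard_singleton]
          omega
      have hcard : ({⟨0, by omega⟩, a} : Set (Fin 3)).ncard = 2 :=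
        Set.ncard_pair hab
      have := sdn_le G' hD
      omega
    · -- n ≥ 4
      have hn4 : 4 ≤ n := by omega
      have hD : IsStrongDominatingSet G'
          ↑((univ : Finset (Fin n)).filter
            (fun i => i.val = n - 1 ∨ sgood (n - 1) i.val)) := by
        intro x hx
        have hng : ¬ (x.val = n - 1 ∨ sgood (n - 1) x.val) := by simpa using hx
        push_neg at hng
        have hxlt : x.val < n - 1 := by
          have := x.isLt
          omega
        obtain ⟨y', hadj, hgood, h0, hlt⟩ :=
          sgood_dom (m := n - 1) (by omega) hxlt hng.2
        have hyval : y' < n := by omega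
        refine ⟨⟨y', hyval⟩, by simp [hgood], ?_, ?_⟩
        · simp only [hG', SimpleGraph.deleteEdges_adj, Set.mem_singleton_iff]
          constructor
          · rw [SimpleGraph.pathGraph_adj]
            simp only []
            omega
          · intro heq
            rcases Sym2.eq_iff.mp heq with ⟨h1, h2⟩ | ⟨h1, h2⟩
            · rw [Fin.ext_iff] at h2; simp at h2; omega
            · rw [Fin.ext_iff] at h2; simp at h2; omega
        · have hyne1 : (⟨y', hyval⟩ : Fin n) ≠ a := by
            rw [Ne, Fin.ext_iff]; simp; omega
          have hyne2 : (⟨y', hyval⟩ : Fin n) ≠ b := by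
            rw [Ne, Fin.ext_iff]; simp; omega
          have : sdeg G' ⟨y', hyval⟩ = 2 := by
            rw [sdeg, hG', nbhd_delete_of_ne _ hyne1 hyne2]
            exact sdeg_path_internal ⟨y', hyval⟩ h0 (by omega)
          rw [this]
          exact sdeg_le_two_of_le hle x
      have hle2 := sdn_le G' hD
      rw [Set.ncard_coe_finset, card_fin_filter n
        (fun i => i = n - 1 ∨ sgood (n - 1) i)] at hle2
      have hsplit : ((range n).filter (fun i => i = n - 1 ∨ sgood (n - 1) i))
          = ((range n).filter (fun i => i = n - 1))
            ∪ ((range n).filter (fun i => sgood (n - 1) i)) := filter_or _ _ _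
      have hdisj : Disjoint ((range n).filter (fun i => i = n - 1))
          ((range n).filter (fun i => sgood (n - 1) i)) := by
        rw [Finset.disjoint_left]
        intro i hi1 hi2
        simp only [mem_filter, mem_range] at hi1 hi2
        rcases hi2.2 with ⟨_, h⟩ | ⟨h1, h2⟩ <;> omega
      have hc1 : ((range n).filter (fun i => i = n - 1)).card = 1 := by
        have : ((range n).filter (fun i => i = n - 1)) = {n - 1} := by
          ext i
          simp only [mem_filter, mem_range, mem_singleton]
          omega
        rw [this, card_singleton]
      have hc2 : ((range n).filter (fun i => sgood (n - 1) i)).card = (n + 1) / 3 := by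
        have heq : ((range n).filter (fun i => sgood (n - 1) i))
            = ((range (n - 1)).filter (fun i => sgood (n - 1) i)) := by
          ext i
          simp only [mem_filter, mem_range]
          constructor
          · rintro ⟨_, hg⟩
            refine ⟨?_, hg⟩
            rcases hg with ⟨_, h⟩ | ⟨h1, h2⟩ <;> omega
          · rintro ⟨hi, hg⟩
            exact ⟨by omega, hg⟩
        rw [heq, card_sgood (n - 1) (by omega)]
        omega
      rw [hsplit, card_union_of_disjoint hdisj, hc1, hc2] at hle2
      omega
  · -- lower bound
    apply le_sdn
    intro D hD
    have hfin : D.Finite := Set.toFinite D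
    have haD : a ∈ D := by
      by_contra haD
      obtain ⟨y, _, hadj, _⟩ := hD a haD
      have : y ∈ G'.neighborSet a := hadj
      rw [hnbA] at this
      exact this
    have h1 := count_le hfin (fun x hx => by
      obtain ⟨y, hy1, hy2, _⟩ := hD x hx
      exact ⟨y, hy1, hy2⟩)
    have haF : a ∈ hfin.toFinset := by simpa using haD
    rw [← Finset.add_sum_erase _ _ haF] at h1
    have hsdA : sdeg G' a = 0 := by
      rw [sdeg, hnbA, Set.ncard_empty]
    have h2 : ∑ y ∈ hfin.toFinset.erase a, (1 + sdeg G' y)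
        ≤ ∑ _y ∈ hfin.toFinset.erase a, 3 := by
      refine sum_le_sum fun y _ => ?_
      have := sdeg_le_two_of_le hle y
      omega
    rw [sum_const, smul_eq_mul] at h2
    have h3 : (hfin.toFinset.erase a).card = hfin.toFinset.card - 1 :=
      card_erase_of_mem haF
    have h4 : 1 ≤ hfin.toFinset.card := card_pos.mpr ⟨a, haF⟩
    have h5 : D.ncard = hfin.toFinset.card := Set.ncard_eq_toFinset_card _ _
    omega

lemma sdeg_map {V W : Type*} {G : SimpleGraph V} {G' : SimpleGraph W} (e : G ≃g G')
    (x : V) : sdeg G' (e x) = sdeg G x := by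
  have himg : G'.neighborSet (e x) = e.toEquiv '' G.neighborSet x := by
    ext j
    rw [Set.mem_image_equiv]
    simp only [SimpleGraph.mem_neighborSet]
    conv_lhs => rw [show j = e (e.toEquiv.symm j) from (e.toEquiv.apply_symm_apply j).symm]
    exact e.map_adj_iff
  rw [sdeg, sdeg, himg, Set.ncard_image_of_injective _ e.toEquiv.injective]

lemma strong_map {V W : Type*} {G : SimpleGraph V} {G' : SimpleGraph W} (e : G ≃g G')
    {D : Set V} (h : IsStrongDominatingSet G D) :
    IsStrongDominatingSet G' (e.toEquiv '' D) := by
  intro x hx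
  obtain ⟨z, rfl⟩ : ∃ z, x = e z := ⟨e.toEquiv.symm x, (e.toEquiv.apply_symm_apply x).symm⟩
  have hz : z ∉ D := fun hc => hx ⟨z, hc, rfl⟩
  obtain ⟨y, hyD, hadj, hdeg⟩ := h z hz
  refine ⟨e y, ⟨y, hyD, rfl⟩, e.map_adj_iff.mpr hadj, ?_⟩
  have h1 : sdeg G' (e z) = sdeg G z := sdeg_map e z
  have h2 : sdeg G' (e y) = sdeg G y := sdeg_map e y
  omega

lemma sdn_congr {V W : Type*} {G : SimpleGraph V} {G' : SimpleGraph W} (e : G ≃g G') :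
    strongDominationNumber G = strongDominationNumber G' := by
  unfold strongDominationNumber
  congr 1
  ext k
  constructor
  · rintro ⟨D, hD, rfl⟩
    exact ⟨_, strong_map e hD,
      Set.ncard_image_of_injective D e.toEquiv.injective⟩
  · rintro ⟨D, hD, rfl⟩
    exact ⟨_, strong_map e.symm hD,
      Set.ncard_image_of_injective D e.symm.toEquiv.injective⟩

def rev_iso (n : ℕ) (hn : 3 ≤ n) (u v a b : Fin n) (hu : u.val = 0) (hv : v.val = 1)
    (ha : a.val = n - 1) (hb : b.val = n - 2) :
    ((SimpleGraph.pathGraph n).deleteEdges {s(u, v)})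
      ≃g ((SimpleGraph.pathGraph n).deleteEdges {s(a, b)}) := by
  refine ⟨Fin.revPerm, ?_⟩
  intro i j
  have hri : (Fin.revPerm i : Fin n).val = n - 1 - i.val := by
    simp [Fin.revPerm_apply, Fin.val_rev]
    omega
  have hrj : (Fin.revPerm j : Fin n).val = n - 1 - j.val := by
    simp [Fin.revPerm_apply, Fin.val_rev]
    omega
  simp only [SimpleGraph.deleteEdges_adj, Set.mem_singleton_iff,
    SimpleGraph.pathGraph_adj, Sym2.eq_iff, Fin.ext_iff, hri, hrj, hu, hv, ha, hb]
  have hi := i.isLt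
  have hj := j.isLt
  constructor
  · rintro ⟨h1, h2⟩
    exact ⟨by omega, by omega⟩
  · rintro ⟨h1, h2⟩
    exact ⟨by omega, by omega⟩

lemma leaf_pos (hn : 3 ≤ n) (u : Fin n) (hu : sdeg (SimpleGraph.pathGraph n) u = 1) :
    u.val = 0 ∨ u.val = n - 1 := by
  by_contra h
  push_neg at h
  have hlt := u.isLt
  have := sdeg_path_internal u (by omega) (by omega)
  omega

end StrongDomAux

/-- For `n ≥ 3` with `n ≢ 1 (mod 3)` and an edge `e = uv` of `P_n`
incident with a leaf (`deg u = 1`, `deg v = 2`),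
`γst(P_n - e) = γst(P_n) + deg u + deg v - 2 = ⌈n/3⌉ + 1`. -/
theorem strongDominationNumber_path_deleteLeafEdge (n : ℕ) (hn : 3 ≤ n)
    (hmod : n % 3 ≠ 1) (u v : Fin n) (huv : (SimpleGraph.pathGraph n).Adj u v)
    (hu : sdeg (SimpleGraph.pathGraph n) u = 1)
    (hv : sdeg (SimpleGraph.pathGraph n) v = 2) :
    strongDominationNumber ((SimpleGraph.pathGraph n).deleteEdges {s(u, v)}) =
      strongDominationNumber (SimpleGraph.pathGraph n) +
        sdeg (SimpleGraph.pathGraph n) u + sdeg (SimpleGraph.pathGraph n) v - 2 ∧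
    strongDominationNumber (SimpleGraph.pathGraph n) +
        sdeg (SimpleGraph.pathGraph n) u + sdeg (SimpleGraph.pathGraph n) v - 2 =
      (n + 2) / 3 + 1 := by
  have hP := sdn_path n hn
  have hvlt := v.isLt
  have key : strongDominationNumber ((SimpleGraph.pathGraph n).deleteEdges {s(u, v)})
      = (n + 2) / 3 + 1 := by
    rcases leaf_pos hn u hu with h0 | h1
    · have hv1 : v.val = 1 := by
        rcases SimpleGraph.pathGraph_adj.mp huv with h | h <;> omega
      have hiso := sdn_congr (rev_iso n hn u v ⟨n - 1, by omega⟩ ⟨n - 2, by omega⟩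
        h0 hv1 rfl rfl)
      rw [hiso, sdn_path_del n hn hmod _ _ rfl rfl]
    · have hv2 : v.val = n - 2 := by
        rcases SimpleGraph.pathGraph_adj.mp huv with h | h <;> omega
      exact sdn_path_del n hn hmod u v h1 hv2
  constructor
  · rw [key, hP, hu, hv]
    omega
  · rw [hP, hu, hv]
    omega
end
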